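/- For every θ ∈ (π/2, 3π/2) with θ ≠ π and every nonzero complex number w₁ with w₁² = d₁(θ), the matrices C₀(θ) and C₁(θ) violate Jørgensen's inequality: |trace(C₁(θ))² − 4| + |trace(C₁(θ)·C₀(θ)·C₁(θ)⁻¹·C₀(θ)⁻¹) − 2| < 1, where |·| denotes the complex absolute value. -/

import Mathlib

noncomputable section

open Matrix Complex

abbrev M2 := Matrix (Fin 2) (Fin 2) ℂ
abbrev SL2C := Matrix.SpecialLinearGroup (Fin 2) ℂ

instance : TopologicalSpace SL2C := instTopologicalSpaceSubtype

/-- The matrix `C₀(θ)`. -/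
def C0 (θ : ℝ) : M2 := (1 / 4 : ℂ) •
  !![((-Real.cos θ + 2 * Real.cos (2 * θ) + Real.cos (3 * θ) + 6 : ℝ) : ℂ) /
        ((Real.sin θ : ℂ)) ^ 2,
     4 * Complex.I * (Real.sin θ : ℂ) * (Real.cos θ : ℂ) / ((Real.cos θ : ℂ) - 1);
     2 * Complex.I * (Real.sin θ : ℂ) * (Real.cos θ : ℂ) / ((Real.sin (θ / 2) : ℂ)) ^ 2,
     4 * ((Real.cos θ : ℂ) + 1)]

/-- The unnormalized action `Â₁(θ)`. -/
def A1 (θ : ℝ) : M2 := (1 / 8 : ℂ) •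
  !![((-Real.cos θ + 2 * Real.cos (2 * θ) + Real.cos (3 * θ) + 6 : ℝ) : ℂ),
     -Complex.I * ((Real.sin θ + 2 * Real.sin (2 * θ) + Real.sin (3 * θ) : ℝ) : ℂ);
     Complex.I * ((Real.sin θ + 2 * Real.sin (2 * θ) + Real.sin (3 * θ) : ℝ) : ℂ),
     ((-7 * Real.cos θ - 2 * Real.cos (2 * θ) - Real.cos (3 * θ) + 2 : ℝ) : ℂ)]

/-- `d₁(θ) = det Â₁(θ)`. -/
def d1 (θ : ℝ) : ℂ :=
  ((5 - 28 * Real.cos θ - 4 * Real.cos (2 * θ) - 4 * Real.cos (3 * θ) -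
      Real.cos (4 * θ) : ℝ) : ℂ) / 32

/-- The normalized action `C₁(θ) = w₁⁻¹ · Â₁(θ)`. -/
def C1 (θ : ℝ) (w₁ : ℂ) : M2 := w₁⁻¹ • A1 θ

/-- The unnormalized action `Â₂(θ)`. -/
def A2 (θ : ℝ) : M2 := (1 / 8 : ℂ) •
  !![((7 * Real.cos θ - 2 * Real.cos (2 * θ) + Real.cos (3 * θ) + 2 : ℝ) : ℂ),
     -Complex.I * ((Real.sin θ - 2 * Real.sin (2 * θ) + Real.sin (3 * θ) : ℝ) : ℂ);
     -8 * Complex.I * ((Real.sin (θ / 2) ^ 2 * Real.sin θ * Real.cos θ : ℝ) : ℂ),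
     ((Real.cos θ + 2 * Real.cos (2 * θ) - Real.cos (3 * θ) + 6 : ℝ) : ℂ)]

/-- `d₂(θ) = det Â₂(θ)`. -/
def d2 (θ : ℝ) : ℂ :=
  ((5 + 28 * Real.cos θ - 4 * Real.cos (2 * θ) + 4 * Real.cos (3 * θ) -
      Real.cos (4 * θ) : ℝ) : ℂ) / 32

/-- The normalized action `C₂(θ) = w₂⁻¹ · Â₂(θ)`. -/
def C2 (θ : ℝ) (w₂ : ℂ) : M2 := w₂⁻¹ • A2 θ

/-- The unnormalized action `Â₃(θ)`, with determinant `cos θ`. -/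
def A3 (θ : ℝ) : M2 :=
  !![(((Real.cos (2 * θ) + 3) / 4 : ℝ) : ℂ),
     Complex.I * ((Real.sin (θ / 2) ^ 2 * Real.sin θ : ℝ) : ℂ);
     -Complex.I * ((Real.sin (θ / 2) ^ 2 * Real.sin θ : ℝ) : ℂ),
     (((Real.sin θ ^ 2 + 2 * Real.cos θ) / 2 : ℝ) : ℂ)]

/-- The normalized action `C₃(θ) = w₃⁻¹ · Â₃(θ)`. -/
def C3 (θ : ℝ) (w₃ : ℂ) : M2 := w₃⁻¹ • A3 θ

/-- The normalized action `C₄(θ)`. -/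
def C4 (θ : ℝ) (w₄ : ℂ) : M2 := (w₄ / 2) •
  !![-(((Real.cos (2 * θ) + 3) : ℝ) : ℂ) / (2 * (Real.cos θ : ℂ)),
     Complex.I * ((Real.sin θ + Real.tan θ : ℝ) : ℂ);
     -Complex.I * ((Real.sin θ + Real.tan θ : ℝ) : ℂ),
     (((4 * Real.cos θ + Real.cos (2 * θ) - 1) : ℝ) : ℂ) / (2 * (Real.cos θ : ℂ))]

/-!
STATEMENT 13: For every θ ∈ (π/2, 3π/2) with θ ≠ π and every nonzero w₁ with w₁² = d₁(θ),
the matrices C₀(θ), C₁(θ) violate Jørgensen's inequality: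
|tr(C₁)² − 4| + |tr(C₁C₀C₁⁻¹C₀⁻¹) − 2| < 1.
-/

/-- Key polynomial trace identity for the commutator computation. -/
lemma trn_aux (C v : ℂ) (hv : v ^ 2 = (C ^ 2 - 1) * C ^ 2) :
    (!![C^3 + C^2 - C + 1, -(v * (1 + C)); v * (1 + C), 1 - C - C^2 - C^3] *
      !![C^3 + C^2 - C + 1, -(v * (1 + C)); v * (1 + C), (1 + C) * (1 - C^2)] *
      (!![C^3 + C^2 - C + 1, -(v * (1 + C)); v * (1 + C), 1 - C - C^2 - C^3]).adjugate *
      (!![C^3 + C^2 - C + 1, -(v * (1 + C)); v * (1 + C), (1 + C) * (1 - C^2)]).adjugate).trace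
    = -2 * (1 - C) * (1 + C)^2 * (C^5 + C^4 + 2*C^3 - 2*C^2 + 3*C - 1) := by
  simp only [Matrix.adjugate_fin_two_of, Matrix.mul_fin_two, Matrix.trace_fin_two_of]
  linear_combination (4 + 4*C - 2*C^2 + 2*C^4 - 4*C^5 - 10*C^6 - 8*C^7 - 2*C^8
    + (2 + 8*C + 12*C^2 + 8*C^3 + 2*C^4) * v^2) * hv

set_option maxHeartbeats 1600000 in
theorem stmt13 (θ : ℝ) (hθ : θ ∈ Set.Ioo (Real.pi / 2) (3 * Real.pi / 2)) (hπ : θ ≠ Real.pi)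
    (w₁ : ℂ) (hw₁ : w₁ ≠ 0) (h1 : w₁ ^ 2 = d1 θ) :
    ‖(C1 θ w₁).trace ^ 2 - 4‖ +
      ‖(C1 θ w₁ * C0 θ * (C1 θ w₁)⁻¹ * (C0 θ)⁻¹).trace - 2‖ < 1 := by
  obtain ⟨hth1, hth2⟩ := hθ
  have hpi := Real.pi_pos
  -- basic real facts
  have hs : Real.sin θ ≠ 0 := by
    intro h
    rcases Real.sin_eq_zero_iff.mp h with ⟨n, hn⟩
    have hn1 : (1:ℝ)/2 < (n:ℝ) := by nlinarith
    have hn2 : (n:ℝ) < 2 := by nlinarith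
    have hn1' : (0:ℤ) < n := by exact_mod_cast lt_trans (by norm_num : (0:ℝ) < 1/2) hn1
    have hn2' : (n:ℤ) < 2 := by exact_mod_cast hn2
    have : n = 1 := by omega
    subst this
    apply hπ
    rw [← hn]; push_cast; ring
  have hpyth : Real.sin θ ^ 2 + Real.cos θ ^ 2 = 1 := Real.sin_sq_add_cos_sq θ
  have hs2pos : 0 < Real.sin θ ^ 2 := by positivity
  have hc0 : Real.cos θ < 0 :=
    Real.cos_neg_of_pi_div_two_lt_of_lt hth1 (by linarith)
  have hc1 : -1 < Real.cos θ := by nlinarith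
  -- complex atoms
  have hS : Complex.sin (θ:ℂ) ^ 2 = 1 - Complex.cos (θ:ℂ) ^ 2 := by
    have := Complex.sin_sq_add_cos_sq (θ:ℂ)
    linear_combination this
  have hv : (Complex.I * Complex.sin (θ:ℂ) * Complex.cos (θ:ℂ)) ^ 2
      = (Complex.cos (θ:ℂ)^2 - 1) * Complex.cos (θ:ℂ)^2 := by
    linear_combination (-(Complex.cos (θ:ℂ))^2) * hS +
      ((Complex.sin (θ:ℂ))^2 * (Complex.cos (θ:ℂ))^2) * Complex.I_sq
  have coscast : ((Real.cos θ : ℝ) : ℂ) = Complex.cos (θ:ℂ) := Complex.ofReal_cos θ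
  have sincast : ((Real.sin θ : ℝ) : ℂ) = Complex.sin (θ:ℂ) := Complex.ofReal_sin θ
  have h1C : (1:ℂ) - Complex.cos (θ:ℂ) ≠ 0 := by
    rw [← coscast]
    exact_mod_cast (by nlinarith : (1:ℝ) - Real.cos θ ≠ 0)
  have h1C' : (1:ℂ) + Complex.cos (θ:ℂ) ≠ 0 := by
    rw [← coscast]
    exact_mod_cast (by nlinarith : (1:ℝ) + Real.cos θ ≠ 0)
  have hCne1 : Complex.cos (θ:ℂ) - 1 ≠ 0 := by
    intro h; apply h1C; linear_combination -h
  have h1C2 : (1:ℂ) - Complex.cos (θ:ℂ)^2 ≠ 0 := by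
    rw [← coscast]
    exact_mod_cast (by nlinarith : (1:ℝ) - Real.cos θ^2 ≠ 0)
  have hPne : (1:ℂ) + Complex.cos (θ:ℂ)^2 ≠ 0 := by
    rw [← coscast]
    exact_mod_cast (by nlinarith : (1:ℝ) + Real.cos θ^2 ≠ 0)
  have hQne : (1:ℂ) - 2*Complex.cos (θ:ℂ) - Complex.cos (θ:ℂ)^2 ≠ 0 := by
    rw [← coscast]
    exact_mod_cast (by nlinarith : (1:ℝ) - 2*Real.cos θ - Real.cos θ^2 ≠ 0)
  have hQne' : (1:ℂ) - Complex.cos (θ:ℂ) * 2 - Complex.cos (θ:ℂ)^2 ≠ 0 := by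
    rw [mul_comm]; exact hQne
  have hSne : Complex.sin (θ:ℂ) ≠ 0 := by
    rw [← sincast]; exact_mod_cast hs
  have hhalf : Complex.sin ((θ:ℂ)/2) ^ 2 = (1 - Complex.cos (θ:ℂ)) / 2 := by
    have h : Real.sin (θ/2) ^ 2 = (1 - Real.cos θ) / 2 := by
      have := Real.sin_sq_eq_half_sub (θ/2)
      rw [show 2 * (θ/2) = θ by ring] at this
      rw [this]; ring
    have := congrArg (fun x : ℝ => (x:ℂ)) h
    push_cast at this
    simpa [Complex.ofReal_sin, Complex.ofReal_cos] using this
  -- trig multiple-angle rewrites (real level)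
  have rc2 : Real.cos (2*θ) = 2*Real.cos θ^2 - 1 := Real.cos_two_mul θ
  have rc3 : Real.cos (3*θ) = 4*Real.cos θ^3 - 3*Real.cos θ := Real.cos_three_mul θ
  have rc4 : Real.cos (4*θ) = 2*(2*Real.cos θ^2-1)^2 - 1 := by
    rw [show (4:ℝ)*θ = 2*(2*θ) by ring, Real.cos_two_mul, rc2]
  have rs2 : Real.sin (2*θ) = 2*Real.sin θ*Real.cos θ := Real.sin_two_mul θ
  have rs3 : Real.sin (3*θ) = 3*Real.sin θ - 4*Real.sin θ^3 := Real.sin_three_mul θ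
  -- explicit forms of A1 and C0
  have hA1 : A1 θ = (1/2 : ℂ) •
      !![Complex.cos (θ:ℂ)^3 + Complex.cos (θ:ℂ)^2 - Complex.cos (θ:ℂ) + 1,
         -(Complex.I * Complex.sin (θ:ℂ) * Complex.cos (θ:ℂ) * (1 + Complex.cos (θ:ℂ)));
         Complex.I * Complex.sin (θ:ℂ) * Complex.cos (θ:ℂ) * (1 + Complex.cos (θ:ℂ)),
         1 - Complex.cos (θ:ℂ) - Complex.cos (θ:ℂ)^2 - Complex.cos (θ:ℂ)^3] := by
    unfold A1
    rw [rc2, rc3, rs2, rs3]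
    ext i j
    fin_cases i <;> fin_cases j <;> simp [Matrix.smul_apply] <;> push_cast
    · ring
    · linear_combination (-(1/2) * Complex.I * Complex.sin (θ:ℂ)) * hS
    · linear_combination (-(1/2) * Complex.I * Complex.sin (θ:ℂ)) * hS
    · ring
  have hC0 : C0 θ = ((1 - Complex.cos (θ:ℂ)^2)⁻¹) •
      !![Complex.cos (θ:ℂ)^3 + Complex.cos (θ:ℂ)^2 - Complex.cos (θ:ℂ) + 1,
         -(Complex.I * Complex.sin (θ:ℂ) * Complex.cos (θ:ℂ) * (1 + Complex.cos (θ:ℂ)));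
         Complex.I * Complex.sin (θ:ℂ) * Complex.cos (θ:ℂ) * (1 + Complex.cos (θ:ℂ)),
         (1 + Complex.cos (θ:ℂ)) * (1 - Complex.cos (θ:ℂ)^2)] := by
    unfold C0
    rw [rc2, rc3]
    ext i j
    fin_cases i <;> fin_cases j <;> simp [Matrix.smul_apply] <;> push_cast
    · rw [hS]; field_simp
      ring
    · field_simp
      ring
    · rw [hhalf]; field_simp
      ring
    · field_simp
      ring
  -- determinants
  have hdetN1 : (!![Complex.cos (θ:ℂ)^3 + Complex.cos (θ:ℂ)^2 - Complex.cos (θ:ℂ) + 1,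
         -(Complex.I * Complex.sin (θ:ℂ) * Complex.cos (θ:ℂ) * (1 + Complex.cos (θ:ℂ)));
         Complex.I * Complex.sin (θ:ℂ) * Complex.cos (θ:ℂ) * (1 + Complex.cos (θ:ℂ)),
         1 - Complex.cos (θ:ℂ) - Complex.cos (θ:ℂ)^2 - Complex.cos (θ:ℂ)^3]).det
      = (1 + Complex.cos (θ:ℂ)^2) * (1 - 2*Complex.cos (θ:ℂ) - Complex.cos (θ:ℂ)^2) := by
    rw [Matrix.det_fin_two_of]
    linear_combination ((1 + Complex.cos (θ:ℂ))^2) * hv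
  have hdetN0 : (!![Complex.cos (θ:ℂ)^3 + Complex.cos (θ:ℂ)^2 - Complex.cos (θ:ℂ) + 1,
         -(Complex.I * Complex.sin (θ:ℂ) * Complex.cos (θ:ℂ) * (1 + Complex.cos (θ:ℂ)));
         Complex.I * Complex.sin (θ:ℂ) * Complex.cos (θ:ℂ) * (1 + Complex.cos (θ:ℂ)),
         (1 + Complex.cos (θ:ℂ)) * (1 - Complex.cos (θ:ℂ)^2)]).det
      = (1 - Complex.cos (θ:ℂ)^2)^2 := by
    rw [Matrix.det_fin_two_of]
    linear_combination ((1 + Complex.cos (θ:ℂ))^2) * hv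
  have hdetC0 : (C0 θ).det = 1 := by
    rw [hC0, Matrix.det_smul, hdetN0]
    simp only [Fintype.card_fin]
    field_simp
  have hdetA1 : (A1 θ).det
      = (1 + Complex.cos (θ:ℂ)^2) * (1 - 2*Complex.cos (θ:ℂ) - Complex.cos (θ:ℂ)^2) / 4 := by
    rw [hA1, Matrix.det_smul, hdetN1]
    simp only [Fintype.card_fin]
    ring
  have hd1 : d1 θ
      = (1 + Complex.cos (θ:ℂ)^2) * (1 - 2*Complex.cos (θ:ℂ) - Complex.cos (θ:ℂ)^2) / 4 := by
    unfold d1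
    rw [rc2, rc3, rc4]
    push_cast
    ring
  have hw2 : w₁^2
      = (1 + Complex.cos (θ:ℂ)^2) * (1 - 2*Complex.cos (θ:ℂ) - Complex.cos (θ:ℂ)^2) / 4 :=
    h1.trans hd1
  have hdetC1 : (C1 θ w₁).det = 1 := by
    unfold C1
    rw [Matrix.det_smul, hdetA1]
    simp only [Fintype.card_fin]
    rw [inv_pow, hw2]
    field_simp
  have hC0inv : (C0 θ)⁻¹ = (C0 θ).adjugate := by
    rw [Matrix.inv_def, hdetC0, Ring.inverse_one, one_smul]
  have hC1inv : (C1 θ w₁)⁻¹ = w₁⁻¹ • (A1 θ).adjugate := by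
    rw [Matrix.inv_def, hdetC1, Ring.inverse_one, one_smul]
    unfold C1
    rw [Matrix.adjugate_smul]
    norm_num
  -- trace of C1
  have htr1 : (C1 θ w₁).trace = w₁⁻¹ * (1 - Complex.cos (θ:ℂ)) := by
    unfold C1
    rw [hA1]
    simp only [Matrix.trace_smul, smul_eq_mul, Matrix.trace_fin_two_of]
    ring
  have ht1 : (C1 θ w₁).trace ^ 2 - 4
      = ((4*Real.cos θ^2*(1+Real.cos θ)^2 /
          ((1+Real.cos θ^2)*(1-2*Real.cos θ-Real.cos θ^2)) : ℝ) : ℂ) := by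
    rw [htr1, mul_pow, inv_pow, hw2]
    push_cast
    field_simp
    ring
  -- trace of commutator
  have hMtr : (C1 θ w₁ * C0 θ * (C1 θ w₁)⁻¹ * (C0 θ)⁻¹).trace
      = (w₁⁻¹ * w₁⁻¹) *
        (A1 θ * C0 θ * (A1 θ).adjugate * (C0 θ).adjugate).trace := by
    rw [hC1inv, hC0inv]
    unfold C1
    simp only [Matrix.smul_mul, Matrix.mul_smul, smul_smul, Matrix.trace_smul,
      smul_eq_mul]
  have hprod : (A1 θ * C0 θ * (A1 θ).adjugate * (C0 θ).adjugate).trace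
      = ((1 - Complex.cos (θ:ℂ)^2)⁻¹)^2 * (1/4) *
        (-2*(1 - Complex.cos (θ:ℂ))*(1 + Complex.cos (θ:ℂ))^2 *
          (Complex.cos (θ:ℂ)^5 + Complex.cos (θ:ℂ)^4 + 2*Complex.cos (θ:ℂ)^3
            - 2*Complex.cos (θ:ℂ)^2 + 3*Complex.cos (θ:ℂ) - 1)) := by
    rw [hA1, hC0, Matrix.adjugate_smul, Matrix.adjugate_smul]
    simp only [Fintype.card_fin, Nat.add_one_sub_one, pow_one]
    simp only [Matrix.smul_mul, Matrix.mul_smul, smul_smul, Matrix.trace_smul,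
      smul_eq_mul]
    rw [trn_aux _ _ hv]
    ring
  have hwinv : w₁⁻¹ * w₁⁻¹
      = ((1 + Complex.cos (θ:ℂ)^2) * (1 - 2*Complex.cos (θ:ℂ) - Complex.cos (θ:ℂ)^2) / 4)⁻¹ := by
    rw [← hw2, ← mul_inv, ← sq]
  have ht2 : (C1 θ w₁ * C0 θ * (C1 θ w₁)⁻¹ * (C0 θ)⁻¹).trace - 2
      = ((-(4*Real.cos θ^4*(1+Real.cos θ) /
          ((1-Real.cos θ)*((1+Real.cos θ^2)*(1-2*Real.cos θ-Real.cos θ^2)))) : ℝ) : ℂ) := by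
    rw [hMtr, hprod, hwinv]
    push_cast
    field_simp
    ring
  -- conclude via real inequality
  rw [ht1, ht2, Complex.norm_real, Complex.norm_real, Real.norm_eq_abs, Real.norm_eq_abs]
  clear hA1 hC0 hdetN1 hdetN0 hdetC0 hdetA1 hd1 hw2 hdetC1 hC0inv hC1inv htr1
  clear ht1 hMtr hprod hwinv ht2 hS hv h1C h1C' hCne1 h1C2 hPne hQne hSne hhalf
  clear coscast sincast rc2 rc3 rc4 rs2 rs3 h1 hw₁ w₁
  set c : ℝ := Real.cos θ with hcdef
  have hden1 : (0:ℝ) < (1+c^2)*(1-2*c-c^2) := by nlinarith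
  have hden2 : (0:ℝ) < (1-c)*((1+c^2)*(1-2*c-c^2)) := by nlinarith
  have hr1 : (0:ℝ) ≤ 4*c^2*(1+c)^2/((1+c^2)*(1-2*c-c^2)) :=
    div_nonneg (by positivity) hden1.le
  have h1pc : (0:ℝ) < 1+c := by linarith
  have hnum2 : (0:ℝ) ≤ 4*c^4*(1+c) := by nlinarith [mul_nonneg (sq_nonneg (c^2)) h1pc.le]
  have hr2 : (0:ℝ) ≤ 4*c^4*(1+c)/((1-c)*((1+c^2)*(1-2*c-c^2))) :=
    div_nonneg hnum2 hden2.le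
  rw [_root_.abs_of_nonneg hr1, _root_.abs_neg, _root_.abs_of_nonneg hr2]
  have hPge : (1:ℝ) ≤ (1+c^2)*(1-2*c-c^2) := by nlinarith
  have hQge : (1:ℝ) ≤ (1-c)*((1+c^2)*(1-2*c-c^2)) := by nlinarith
  have e1 : 4*c^2*(1+c)^2/((1+c^2)*(1-2*c-c^2)) ≤ 4*c^2*(1+c)^2 :=
    div_le_self (by positivity) hPge
  have e2 : 4*c^4*(1+c)/((1-c)*((1+c^2)*(1-2*c-c^2))) ≤ 4*c^4*(1+c) :=
    div_le_self hnum2 hQge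
  have key : 4*c^2*(1+c)^2 + 4*c^4*(1+c) < 1 := by
    nlinarith [sq_nonneg (c*(1+c)), sq_nonneg (c+1/2), sq_nonneg (c^2+c),
      sq_nonneg (c^2*(1+c)), sq_nonneg ((c+1)*(c+1/2)), sq_nonneg (c^2+c^3)]
  linarith
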